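/- If X ~ UG(α₁, β) and Y ~ UG(α₂, β) are independent unit-Gompertz random variables with common scale parameter β, then P(Y < X) = α₁/(α₁ + α₂). -/

import Mathlib

open MeasureTheory ProbabilityTheory Real

/-- The unit-Gompertz cdf, extended to all of ℝ. -/
noncomputable def ugCDF (α β x : ℝ) : ℝ :=
  if x ≤ 0 then 0 else if x < 1 then Real.exp (-α * (1 / x ^ β - 1)) else 1

section aux
open Set Filter


noncomputable def ugF (c β x : ℝ) : ℝ := Real.exp (-c * (1 / x ^ β - 1))

theorem ug_contOn (c β a b : ℝ) (ha : 0 < a) :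
    ContinuousOn (fun x : ℝ => c * β * Real.exp (-c * (1 / x ^ β - 1)) / x ^ (β + 1)) (Icc a b) := by
  intro x hx
  have hx0 : 0 < x := lt_of_lt_of_le ha hx.1
  have h1 : ContinuousAt (fun x : ℝ => x ^ β) x :=
    Real.continuousAt_rpow_const x β (Or.inl hx0.ne')
  have h2 : ContinuousAt (fun x : ℝ => x ^ (β + 1)) x :=
    Real.continuousAt_rpow_const x (β + 1) (Or.inl hx0.ne')
  have hne : x ^ β ≠ 0 := (Real.rpow_pos_of_pos hx0 β).ne'
  have hne2 : x ^ (β + 1) ≠ 0 := (Real.rpow_pos_of_pos hx0 (β + 1)).ne'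
  have e1 : ContinuousAt (fun x : ℝ => -c * (1 / x ^ β - 1)) x :=
    ((continuousAt_const.div h1 hne).sub continuousAt_const).const_mul (-c)
  have e2 : ContinuousAt (fun x : ℝ => c * β * Real.exp (-c * (1 / x ^ β - 1)) / x ^ (β + 1)) x :=
    ContinuousAt.div ((e1.rexp).const_mul (c * β)) h2 hne2
  exact e2.continuousWithinAt

theorem ug_tendsto_zero (c β : ℝ) (hc : 0 < c) (hβ : 0 < β) :
    Tendsto (ugF c β) (nhdsWithin 0 (Ioi 0)) (nhds 0) := by
  have h1 : Tendsto (fun t : ℝ => t ^ β) (nhdsWithin 0 (Ioi 0)) (nhdsWithin 0 (Ioi 0)) := by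
    rw [tendsto_nhdsWithin_iff]
    constructor
    · have := (Real.continuousAt_rpow_const 0 β (Or.inr hβ.le)).tendsto
      rw [Real.zero_rpow hβ.ne'] at this
      exact this.mono_left nhdsWithin_le_nhds
    · filter_upwards [self_mem_nhdsWithin] with t ht
      exact Real.rpow_pos_of_pos ht β
  have h2 : Tendsto (fun u : ℝ => 1 / u) (nhdsWithin 0 (Ioi 0)) atTop := by
    simpa [one_div] using tendsto_inv_nhdsGT_zero
  have h3 : Tendsto (fun v : ℝ => -c * (v - 1)) atTop atBot := by
    have h := tendsto_atBot_add_const_right atTop c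
      (tendsto_id.const_mul_atTop_of_neg (neg_neg_iff_pos.mpr hc))
    exact h.congr fun v => by simp only [id]; ring
  have := Real.tendsto_exp_atBot.comp ((h3.comp (h2.comp h1)))
  exact this

theorem ugF_deriv (c β : ℝ) {t : ℝ} (ht : 0 < t) :
    HasDerivAt (ugF c β) (c * β * Real.exp (-c * (1 / t ^ β - 1)) / t ^ (β + 1)) t := by
  have hne : t ^ β ≠ 0 := (Real.rpow_pos_of_pos ht β).ne'
  have h1 : HasDerivAt (fun x : ℝ => x ^ β) (β * t ^ (β - 1)) t :=
    Real.hasDerivAt_rpow_const (Or.inl ht.ne')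
  have h2 : HasDerivAt (fun x : ℝ => 1 / x ^ β - 1)
      (-(β * t ^ (β - 1)) / (t ^ β) ^ 2) t := by
    simpa [one_div] using (h1.inv hne).sub_const 1
  have h3 := ((h2.const_mul (-c)).exp)
  convert h3 using 1
  · rfl
  have key : t ^ (β - 1) / (t ^ β) ^ 2 = 1 / t ^ (β + 1) := by
    rw [sq, ← Real.rpow_add ht, div_eq_div_iff (by positivity) (by positivity),
      ← Real.rpow_add ht, one_mul]
    ring_nf
  have : Real.exp (-c * (1 / t ^ β - 1)) * (-c * (-(β * t ^ (β - 1)) / (t ^ β) ^ 2))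
      = Real.exp (-c * (1 / t ^ β - 1)) * (c * β * (t ^ (β - 1) / (t ^ β) ^ 2)) := by ring
  rw [this, key]
  ring

noncomputable def ugPDF (c β x : ℝ) : ℝ :=
  if 0 < x ∧ x < 1 then c * β * Real.exp (-c * (1 / x ^ β - 1)) / x ^ (β + 1) else 0

theorem ugPDF_nonneg (c β x : ℝ) (hc : 0 < c) (hβ : 0 < β) : 0 ≤ ugPDF c β x := by
  unfold ugPDF
  split
  · next h =>
      have hx : 0 < x := h.1
      positivity
  · exact le_refl 0

theorem ugPDF_measurable (c β : ℝ) : Measurable (ugPDF c β) := by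
  unfold ugPDF
  refine Measurable.ite ?_ ?_ measurable_const
  · exact (measurableSet_Ioi.inter measurableSet_Iio : MeasurableSet {x : ℝ | 0 < x ∧ x < 1})
  · fun_prop

/-- The candidate law. -/
noncomputable def ugMeasure (c β : ℝ) : Measure ℝ :=
  MeasureTheory.volume.withDensity (fun x => ENNReal.ofReal (ugPDF c β x))

theorem ug_integral (c β : ℝ) (hc : 0 < c) (hβ : 0 < β) {a b : ℝ} (ha : 0 < a) (hab : a ≤ b) :
    ∫ t in a..b, c * β * Real.exp (-c * (1 / t ^ β - 1)) / t ^ (β + 1) = ugF c β b - ugF c β a := by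
  refine intervalIntegral.integral_eq_sub_of_hasDerivAt (fun t ht => ?_) ?_
  · have ht0 : 0 < t := lt_of_lt_of_le ha (by rw [uIcc_of_le hab] at ht; exact ht.1)
    exact ugF_deriv c β ht0
  · rw [intervalIntegrable_iff_integrableOn_Icc_of_le hab]
    exact (ug_contOn c β a b ha).integrableOn_compact isCompact_Icc



theorem ugMeasure_Ioc (c β : ℝ) (hc : 0 < c) (hβ : 0 < β) {a b : ℝ} (ha : 0 < a)
    (hab : a ≤ b) (hb : b ≤ 1) :
    ugMeasure c β (Ioc a b) = ENNReal.ofReal (ugF c β b - ugF c β a) := by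
  set g : ℝ → ℝ := fun t => c * β * Real.exp (-c * (1 / t ^ β - 1)) / t ^ (β + 1) with hg
  have hone : ∀ᵐ t ∂(volume : Measure ℝ), t ≠ 1 := by
    rw [ae_iff]
    simpa using Real.volume_singleton
  have hae : ∀ᵐ t ∂(volume.restrict (Ioc a b)),
      ENNReal.ofReal (ugPDF c β t) = ENNReal.ofReal (g t) := by
    rw [ae_restrict_iff' measurableSet_Ioc]
    filter_upwards [hone] with t ht hmem
    have h1 : 0 < t := lt_of_lt_of_le ha hmem.1.le
    have h2 : t < 1 := lt_of_le_of_ne (hmem.2.trans hb) ht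
    unfold ugPDF
    rw [if_pos ⟨h1, h2⟩]
  have hint : IntegrableOn g (Ioc a b) volume :=
    ((ug_contOn c β a b ha).integrableOn_compact isCompact_Icc).mono_set Ioc_subset_Icc_self
  have hnn : 0 ≤ᵐ[volume.restrict (Ioc a b)] g := by
    show ∀ᵐ t ∂(volume.restrict (Ioc a b)), 0 ≤ g t
    rw [ae_restrict_iff' measurableSet_Ioc]
    filter_upwards with t hmem
    have h1 : 0 < t := lt_of_lt_of_le ha hmem.1.le
    simp only [hg]
    positivity
  rw [ugMeasure, withDensity_apply _ measurableSet_Ioc, lintegral_congr_ae hae,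
    ← ofReal_integral_eq_lintegral_ofReal hint hnn, ← intervalIntegral.integral_of_le hab,
    ug_integral c β hc hβ ha hab]

theorem ugMeasure_zero_on (c β : ℝ) {s : Set ℝ} (hs : MeasurableSet s)
    (h : ∀ t ∈ s, ¬(0 < t ∧ t < 1)) : ugMeasure c β s = 0 := by
  rw [ugMeasure, withDensity_apply _ hs]
  have : ∀ᵐ t ∂(volume.restrict s), ENNReal.ofReal (ugPDF c β t) = 0 := by
    rw [ae_restrict_iff' hs]
    filter_upwards with t ht
    unfold ugPDF
    rw [if_neg (h t ht)]
    simp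
  rw [lintegral_congr_ae this, lintegral_zero]

theorem ugMeasure_Iic_of_le_one (c β : ℝ) (hc : 0 < c) (hβ : 0 < β) {x : ℝ}
    (hx0 : 0 < x) (hx1 : x ≤ 1) :
    ugMeasure c β (Iic x) = ENNReal.ofReal (ugF c β x) := by
  have h0 : ugMeasure c β (Iic 0) = 0 :=
    ugMeasure_zero_on c β measurableSet_Iic (fun t ht hcon => absurd (lt_of_lt_of_le hcon.1 ht) (lt_irrefl 0))
  have hsplit : Iic x = Iic 0 ∪ Ioc 0 x := (Iic_union_Ioc_eq_Iic hx0.le).symm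
  rw [hsplit, measure_union (Iic_disjoint_Ioc le_rfl) measurableSet_Ioc, h0, zero_add]
  set s : ℕ → Set ℝ := fun n => Ioc (x / ((n : ℝ) + 2)) x with hs
  have hmono : Monotone s := by
    intro n m hnm
    apply Ioc_subset_Ioc_left
    have hle : (n : ℝ) ≤ m := Nat.cast_le.mpr hnm
    rw [div_le_div_iff₀ (by positivity) (by positivity)]
    nlinarith
  have hunion : ⋃ n, s n = Ioc 0 x := by
    ext t
    simp only [hs, mem_iUnion, mem_Ioc]
    constructor
    · rintro ⟨n, h1, h2⟩
      have : (0:ℝ) < x / ((n : ℝ) + 2) := by positivity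
      exact ⟨this.trans h1, h2⟩
    · rintro ⟨ht0, htx⟩
      obtain ⟨n, hn⟩ := exists_nat_gt (x / t)
      refine ⟨n, ?_, htx⟩
      have h2 : x / t < (n : ℝ) + 2 := hn.trans (by linarith)
      have h3 : x < ((n : ℝ) + 2) * t := (div_lt_iff₀ ht0).mp h2
      rw [div_lt_iff₀ (by positivity)]
      linarith
  have htend := tendsto_measure_iUnion_atTop (μ := ugMeasure c β) hmono
  rw [hunion] at htend
  have heq : ∀ n : ℕ, ugMeasure c β (s n)
      = ENNReal.ofReal (ugF c β x - ugF c β (x / ((n : ℝ) + 2))) := by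
    intro n
    exact ugMeasure_Ioc c β hc hβ (by positivity)
      (by rw [div_le_iff₀ (by positivity)]; nlinarith) hx1
  have ha : Tendsto (fun n : ℕ => x / ((n : ℝ) + 2)) atTop (nhdsWithin 0 (Ioi 0)) := by
    rw [tendsto_nhdsWithin_iff]
    constructor
    · exact Tendsto.div_atTop tendsto_const_nhds
        (tendsto_atTop_add_const_right atTop 2 tendsto_natCast_atTop_atTop)
    · filter_upwards with n
      simp only [mem_Ioi]
      positivity
  have h1 : Tendsto (fun n : ℕ => ugF c β (x / ((n : ℝ) + 2))) atTop (nhds 0) :=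
    (ug_tendsto_zero c β hc hβ).comp ha
  have h2 : Tendsto (fun n : ℕ => ugF c β x - ugF c β (x / ((n : ℝ) + 2))) atTop
      (nhds (ugF c β x)) := by
    simpa using tendsto_const_nhds.sub h1
  have hlim : Tendsto (fun n : ℕ => ugMeasure c β (s n)) atTop
      (nhds (ENNReal.ofReal (ugF c β x))) := by
    simp only [heq]
    exact (ENNReal.continuous_ofReal.tendsto _).comp h2
  exact tendsto_nhds_unique htend hlim

theorem ugF_one (c β : ℝ) : ugF c β 1 = 1 := by
  unfold ugF
  simp [Real.one_rpow]

theorem ugMeasure_Iic_one (c β : ℝ) (hc : 0 < c) (hβ : 0 < β) :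
    ugMeasure c β (Iic 1) = 1 := by
  rw [ugMeasure_Iic_of_le_one c β hc hβ one_pos le_rfl, ugF_one]
  simp

theorem ugMeasure_univ (c β : ℝ) (hc : 0 < c) (hβ : 0 < β) :
    ugMeasure c β univ = 1 := by
  have : (univ : Set ℝ) = Iic 1 ∪ Ioi 1 := (Iic_union_Ioi).symm
  rw [this, measure_union (Iic_disjoint_Ioi le_rfl) measurableSet_Ioi,
    ugMeasure_Iic_one c β hc hβ,
    ugMeasure_zero_on c β measurableSet_Ioi (fun t ht hcon => absurd (hcon.2.trans ht) (lt_irrefl t)),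
    add_zero]

theorem ugCDF_measurable (c β : ℝ) : Measurable (ugCDF c β) := by
  unfold ugCDF
  refine Measurable.ite ?_ measurable_const (Measurable.ite ?_ (by fun_prop) measurable_const)
  · exact measurableSet_le measurable_id measurable_const
  · exact measurableSet_lt measurable_id measurable_const

theorem ugCDF_nonneg (c β x : ℝ) : 0 ≤ ugCDF c β x := by
  unfold ugCDF
  split
  · exact le_refl 0
  split
  · positivity
  · exact zero_le_one

theorem ugMeasure_Iic_eq (c β : ℝ) (hc : 0 < c) (hβ : 0 < β) (x : ℝ) :
    ugMeasure c β (Iic x) = ENNReal.ofReal (ugCDF c β x) := by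
  rcases le_or_gt x 0 with hx0 | hx0
  · rw [ugMeasure_zero_on c β measurableSet_Iic
      (fun t ht hcon => absurd (hcon.1.trans_le (ht.trans hx0)) (lt_irrefl 0))]
    unfold ugCDF
    rw [if_pos hx0]
    simp
  rcases lt_or_ge x 1 with hx1 | hx1
  · rw [ugMeasure_Iic_of_le_one c β hc hβ hx0 hx1.le]
    unfold ugCDF ugF
    rw [if_neg (not_le.mpr hx0), if_pos hx1]
  · have hsplit : Iic x = Iic 1 ∪ Ioc 1 x := (Iic_union_Ioc_eq_Iic hx1).symm
    rw [hsplit, measure_union (Iic_disjoint_Ioc le_rfl) measurableSet_Ioc,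
      ugMeasure_Iic_one c β hc hβ,
      ugMeasure_zero_on c β measurableSet_Ioc (fun t ht hcon => absurd (hcon.2.trans' ht.1) (lt_irrefl 1)),
      add_zero]
    unfold ugCDF
    rw [if_neg (by linarith), if_neg (not_lt.mpr hx1)]
    simp

theorem ugMeasure_Iio_eq (c β : ℝ) (hc : 0 < c) (hβ : 0 < β) (x : ℝ) :
    ugMeasure c β (Iio x) = ENNReal.ofReal (ugCDF c β x) := by
  have hsing : ugMeasure c β {x} = 0 := by
    rw [ugMeasure, withDensity_apply _ (measurableSet_singleton x)]
    exact setLIntegral_measure_zero _ _ (measure_singleton x)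
  have hsplit : ugMeasure c β (Iic x) = ugMeasure c β (Iio x) + ugMeasure c β {x} := by
    rw [← measure_union (by simp) (measurableSet_singleton x), Iio_union_right]
  rw [← ugMeasure_Iic_eq c β hc hβ x, hsplit, hsing, add_zero]

theorem key_pointwise (α₁ α₂ β x : ℝ) (h1 : 0 < α₁) (h2 : 0 < α₂) (hβ : 0 < β) :
    ENNReal.ofReal (ugPDF α₁ β x) * ENNReal.ofReal (ugCDF α₂ β x)
      = ENNReal.ofReal (α₁ / (α₁ + α₂)) * ENNReal.ofReal (ugPDF (α₁ + α₂) β x) := by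
  by_cases hx : 0 < x ∧ x < 1
  · obtain ⟨hx0, hx1⟩ := hx
    have hxb : (0:ℝ) < x ^ (β + 1) := Real.rpow_pos_of_pos hx0 _
    rw [← ENNReal.ofReal_mul (by unfold ugPDF; rw [if_pos ⟨hx0, hx1⟩]; positivity),
      ← ENNReal.ofReal_mul (by positivity)]
    congr 1
    rw [show ugCDF α₂ β x = Real.exp (-α₂ * (1 / x ^ β - 1)) from by
      unfold ugCDF; rw [if_neg (not_le.mpr hx0), if_pos hx1]]
    rw [show ugPDF α₁ β x = α₁ * β * Real.exp (-α₁ * (1 / x ^ β - 1)) / x ^ (β + 1) from by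
      unfold ugPDF; rw [if_pos ⟨hx0, hx1⟩]]
    rw [show ugPDF (α₁ + α₂) β x
        = (α₁ + α₂) * β * Real.exp (-(α₁ + α₂) * (1 / x ^ β - 1)) / x ^ (β + 1) from by
      unfold ugPDF; rw [if_pos ⟨hx0, hx1⟩]]
    have hsum : α₁ + α₂ ≠ 0 := by positivity
    have hE : Real.exp (-α₁ * (1 / x ^ β - 1)) * Real.exp (-α₂ * (1 / x ^ β - 1))
        = Real.exp (-(α₁ + α₂) * (1 / x ^ β - 1)) := by
      rw [← Real.exp_add]; ring_nf
    rw [← hE]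
    field_simp
  · unfold ugPDF
    rw [if_neg hx, if_neg hx]
    simp

end aux

open Set in
theorem unitGompertz_stress_strength {Ω : Type*} [MeasureSpace Ω]
    [IsProbabilityMeasure (ℙ : Measure Ω)]
    (α₁ α₂ β : ℝ) (hα₁ : 0 < α₁) (hα₂ : 0 < α₂) (hβ : 0 < β)
    (X Y : Ω → ℝ) (hX : Measurable X) (hY : Measurable Y)
    (hind : ProbabilityTheory.IndepFun X Y)
    (hFX : ∀ x : ℝ, ℙ {ω | X ω ≤ x} = ENNReal.ofReal (ugCDF α₁ β x))
    (hFY : ∀ x : ℝ, ℙ {ω | Y ω ≤ x} = ENNReal.ofReal (ugCDF α₂ β x)) :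
    ℙ {ω | Y ω < X ω} = ENNReal.ofReal (α₁ / (α₁ + α₂)) := by
  haveI i1 : IsProbabilityMeasure (ugMeasure α₁ β) := ⟨ugMeasure_univ α₁ β hα₁ hβ⟩
  haveI i2 : IsProbabilityMeasure (ugMeasure α₂ β) := ⟨ugMeasure_univ α₂ β hα₂ hβ⟩
  haveI : IsProbabilityMeasure (Measure.map X ℙ) := Measure.isProbabilityMeasure_map hX.aemeasurable
  haveI : IsProbabilityMeasure (Measure.map Y ℙ) := Measure.isProbabilityMeasure_map hY.aemeasurable
  have hmapX : Measure.map X ℙ = ugMeasure α₁ β := by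
    refine Measure.ext_of_Iic _ _ (fun a => ?_)
    rw [Measure.map_apply hX measurableSet_Iic, ugMeasure_Iic_eq α₁ β hα₁ hβ a]
    exact hFX a
  have hmapY : Measure.map Y ℙ = ugMeasure α₂ β := by
    refine Measure.ext_of_Iic _ _ (fun a => ?_)
    rw [Measure.map_apply hY measurableSet_Iic, ugMeasure_Iic_eq α₂ β hα₂ hβ a]
    exact hFY a
  have hms : MeasurableSet {p : ℝ × ℝ | p.2 < p.1} :=
    measurableSet_lt measurable_snd measurable_fst
  have hset : {ω | Y ω < X ω} = (fun ω => (X ω, Y ω)) ⁻¹' {p : ℝ × ℝ | p.2 < p.1} := rfl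
  rw [hset, ← Measure.map_apply (hX.prodMk hY) hms,
    (ProbabilityTheory.indepFun_iff_map_prod_eq_prod_map_map hX.aemeasurable
      hY.aemeasurable).mp hind, hmapX, hmapY, Measure.prod_apply hms]
  have hpre : ∀ x : ℝ, (Prod.mk x ⁻¹' {p : ℝ × ℝ | p.2 < p.1}) = Iio x := by
    intro x; ext y; simp [Set.mem_Iio]
  calc ∫⁻ x, ugMeasure α₂ β (Prod.mk x ⁻¹' {p : ℝ × ℝ | p.2 < p.1}) ∂(ugMeasure α₁ β)
      = ∫⁻ x, ENNReal.ofReal (ugCDF α₂ β x) ∂(ugMeasure α₁ β) := by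
        refine lintegral_congr fun x => ?_
        rw [hpre x, ugMeasure_Iio_eq α₂ β hα₂ hβ]
    _ = ∫⁻ x, ENNReal.ofReal (ugPDF α₁ β x) * ENNReal.ofReal (ugCDF α₂ β x) ∂volume := by
        have h := lintegral_withDensity_eq_lintegral_mul volume
            ((ugPDF_measurable α₁ β).ennreal_ofReal)
            ((ugCDF_measurable α₂ β).ennreal_ofReal)
        simp only [Pi.mul_apply] at h
        exact h
    _ = ∫⁻ x, ENNReal.ofReal (α₁ / (α₁ + α₂)) * ENNReal.ofReal (ugPDF (α₁ + α₂) β x) ∂volume :=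
        lintegral_congr fun x => key_pointwise α₁ α₂ β x hα₁ hα₂ hβ
    _ = ENNReal.ofReal (α₁ / (α₁ + α₂)) * ∫⁻ x, ENNReal.ofReal (ugPDF (α₁ + α₂) β x) ∂volume :=
        lintegral_const_mul _ ((ugPDF_measurable _ β).ennreal_ofReal)
    _ = ENNReal.ofReal (α₁ / (α₁ + α₂)) := by
        have huniv : ∫⁻ x, ENNReal.ofReal (ugPDF (α₁ + α₂) β x) ∂volume
            = ugMeasure (α₁ + α₂) β Set.univ := by
          rw [ugMeasure, withDensity_apply _ MeasurableSet.univ, Measure.restrict_univ]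
        rw [huniv, ugMeasure_univ _ β (by positivity) hβ, mul_one]
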